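/- arXiv:1111.4767 — 4 statements merged into one kernel-verified Lean document; each statement's English description precedes it below -/
import Mathlib

section
/- In the setting of the equations ṡ = v cos α/(1+κd), ḋ = −v sin α, α̇ = −κṡ + u with |u| ≤ v/R, suppose 1 + κd > 0, d > R, and additionally if κ < 0 then 1/|κ| > d + R. Then when α → 0 with cos α → sgn(ṡ) and u = (v/R) sgn(ṡ) one has d̈ → −v²(1 + κd − κR)/(R(1+κd)) < 0, while when u = −(v/R) sgn(ṡ) one has d̈ → v²(1 + κd + κR)/(R(1+κd)) > 0; consequently the surface ḋ = 0 is a sliding surface for the switching control law u = (v/R)·sgn(ṡ) for ḋ > 0 and u = −(v/R)·sgn(ṡ) for ḋ < 0. -/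
/-- In the setting d̈ = −v²[(u/v)·sgn(ṡ) − κ/(1+κd)] with |u| ≤ v/R,
1 + κd > 0, d > R, and 1/|κ| > d + R when κ < 0 (ε = sgn(ṡ) = ±1): with
u = (v/R)·ε (the side ḋ > 0) one gets d̈ = −v²(1+κd−κR)/(R(1+κd)) < 0, and with
u = −(v/R)·ε (the side ḋ < 0) one gets d̈ = v²(1+κd+κR)/(R(1+κd)) > 0; hence the
surface ḋ = 0 is sliding for the switching law. -/
theorem stmt_6
    (v R κ d ε : ℝ) (hv : 0 < v) (hR : 0 < R)
    (hε : ε = 1 ∨ ε = -1)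
    (h1 : 0 < 1 + κ * d) (hdR : R < d)
    (hκ : κ < 0 → d + R < 1 / |κ|) :
    (-(v ^ 2) * ((v / R * ε) / v * ε - κ / (1 + κ * d)) =
        -(v ^ 2) * (1 + κ * d - κ * R) / (R * (1 + κ * d)) ∧
      -(v ^ 2) * (1 + κ * d - κ * R) / (R * (1 + κ * d)) < 0) ∧
    (-(v ^ 2) * ((-(v / R) * ε) / v * ε - κ / (1 + κ * d)) =
        v ^ 2 * (1 + κ * d + κ * R) / (R * (1 + κ * d)) ∧
      0 < v ^ 2 * (1 + κ * d + κ * R) / (R * (1 + κ * d))) := by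
  have hv' : v ≠ 0 := ne_of_gt hv
  have hR' : R ≠ 0 := ne_of_gt hR
  have h1' : (1 + κ * d) ≠ 0 := ne_of_gt h1
  have hm : 0 < 1 + κ * d - κ * R := by
    rcases le_or_gt 0 κ with hk | hk
    · nlinarith
    · nlinarith
  have hp : 0 < 1 + κ * d + κ * R := by
    rcases le_or_gt 0 κ with hk | hk
    · nlinarith
    · have := hκ hk
      rw [abs_of_neg hk, lt_div_iff₀ (by linarith : (0:ℝ) < -κ)] at this
      nlinarith [pow_pos hv 2]
  have hden : 0 < R * (1 + κ * d) := mul_pos hR h1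
  refine ⟨⟨?_, ?_⟩, ⟨?_, ?_⟩⟩
  · rcases hε with h | h <;> subst h <;> field_simp <;> ring
  · apply div_neg_of_neg_of_pos _ hden
    nlinarith [pow_pos hv 2]
  · rcases hε with h | h <;> subst h <;> field_simp <;> ring
  · apply div_pos _ hden
    nlinarith [pow_pos hv 2]
end

section
/- Consider the sliding-surface analysis: in the region where the vehicle moves with d ≤ d_trig and ḋ > 0, or d > d_trig, under the control law u = ū·sgn(β), the surface β = 0 is a sliding surface with equivalent control u ≡ 0; that is, as the state approaches β = 0 from either side, β̇ → −ū·sgn(β), so trajectories from both sides point toward the surface β = 0. -/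
open Filter Topology

/-- For the bearing dynamics β̇ = (v/h) sin β − ū·sgn β (control
u = ū·sgn β, h > 0 the distance to the target), the surface β = 0 is sliding: as
β → 0⁺ one has β̇ → −ū, as β → 0⁻ one has β̇ → ū, near β = 0 the vector field
points toward the surface from both sides, and the equivalent control keeping
β ≡ 0 is u = (v/h)·sin 0 = 0. -/
theorem stmt_12
    (v ubar h : ℝ) (hv : 0 < v) (hu : 0 < ubar) (hh : 0 < h) :
    Tendsto (fun β : ℝ => v / h * Real.sin β - ubar * Real.sign β)
      (nhdsWithin 0 (Set.Ioi 0)) (nhds (-ubar)) ∧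
    Tendsto (fun β : ℝ => v / h * Real.sin β - ubar * Real.sign β)
      (nhdsWithin 0 (Set.Iio 0)) (nhds ubar) ∧
    (∃ δ > 0, ∀ β : ℝ, β ≠ 0 → |β| < δ →
      Real.sign β * (v / h * Real.sin β - ubar * Real.sign β) < 0) ∧
    v / h * Real.sin 0 = 0 := by
  have hbase : Tendsto (fun β : ℝ => v / h * Real.sin β) (nhds (0:ℝ))
      (nhds 0) := by
    have : Continuous fun β : ℝ => v / h * Real.sin β := by continuity
    simpa using this.tendsto 0
  refine ⟨?_, ?_, ?_, by simp⟩
  · have h1 : Tendsto (fun β : ℝ => v / h * Real.sin β - ubar)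
        (nhdsWithin 0 (Set.Ioi 0)) (nhds (-ubar)) := by
      have := (hbase.mono_left (nhdsWithin_le_nhds (s := Set.Ioi (0:ℝ)))).sub (tendsto_const_nhds (x := ubar))
      simpa using this
    refine h1.congr' ?_
    filter_upwards [self_mem_nhdsWithin] with β hβ
    rw [Real.sign_of_pos hβ]; ring
  · have h1 : Tendsto (fun β : ℝ => v / h * Real.sin β + ubar)
        (nhdsWithin 0 (Set.Iio 0)) (nhds ubar) := by
      have := (hbase.mono_left (nhdsWithin_le_nhds (s := Set.Iio (0:ℝ)))).add (tendsto_const_nhds (x := ubar))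
      simpa using this
    refine h1.congr' ?_
    filter_upwards [self_mem_nhdsWithin] with β hβ
    rw [Real.sign_of_neg hβ]; ring
  · refine ⟨ubar * h / v, by positivity, fun β hβ hβδ => ?_⟩
    have hsq : Real.sign β * Real.sign β = 1 := by
      rcases lt_trichotomy β 0 with h' | h' | h'
      · rw [Real.sign_of_neg h']; ring
      · exact absurd h' hβ
      · rw [Real.sign_of_pos h']; ring
    have habs : |Real.sign β| = 1 := by
      rcases lt_trichotomy β 0 with h' | h' | h'
      · rw [Real.sign_of_neg h']; simp
      · exact absurd h' hβ
      · rw [Real.sign_of_pos h']; simp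
    have key : Real.sign β * (v / h * Real.sin β) ≤ v / h * |β| := by
      calc Real.sign β * (v / h * Real.sin β)
          ≤ |Real.sign β * (v / h * Real.sin β)| := le_abs_self _
        _ = v / h * |Real.sin β| := by
            rw [abs_mul, habs, one_mul, abs_mul, abs_of_pos (by positivity)]
        _ ≤ v / h * |β| := by
            exact mul_le_mul_of_nonneg_left (Real.abs_sin_le_abs) (by positivity)
    have klt : v / h * |β| < ubar := by
      calc v / h * |β| < v / h * (ubar * h / v) :=
            mul_lt_mul_of_pos_left hβδ (by positivity)
        _ = ubar := by field_simp
    have : Real.sign β * (v / h * Real.sin β - ubar * Real.sign β)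
        = Real.sign β * (v / h * Real.sin β) - ubar := by
      rw [mul_sub]; rw [show Real.sign β * (ubar * Real.sign β)
        = ubar * (Real.sign β * Real.sign β) by ring, hsq, mul_one]
    rw [this]
    linarith
end

section
/- Let D be a planar obstacle satisfying: the safety margin satisfies d_safe > R, the triggering distance satisfies d_safe + 2R < d_trig, and for concave boundary points the curvature radius satisfies R_κ > R + d_trig. Then along any trajectory of the unicycle with turning radius bound R in the region d ≤ d_trig, under constant control u = −ū the angle α satisfies α̇ ≤ −δ < 0 for some δ > 0; i.e., the velocity direction rotates clockwise at a rate bounded away from zero. -/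
private lemma stmt_14_aux (v R dsafe dtrig m k c d : ℝ)
    (hv : 0 < v) (hR : 0 < R) (hds : 0 < dsafe) (hsafe : R < dsafe)
    (hdt : dsafe < dtrig) (hm0 : 0 ≤ m) (hm1 : m * (R + dtrig) < 1)
    (hkm : -k ≤ m) (hc1 : c ≤ 1) (hc2 : -1 ≤ c)
    (hd1 : dsafe ≤ d) (hd2 : d ≤ dtrig) (hP : 0 < 1 + k * d) :
    -k * (v * c / (1 + k * d)) + -(v / R) ≤
      -(v * min (1/R - 1/dsafe) ((1 - m*(R+dtrig)) / (R * (1 - m*dtrig)))) := by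
  have hdt0 : 0 < dtrig := lt_trans hds hdt
  have hMden : 0 < 1 - m * dtrig := by nlinarith
  set A : ℝ := 1/R - 1/dsafe with hAdef
  set B : ℝ := (1 - m*(R+dtrig)) / (R * (1 - m*dtrig)) with hBdef
  clear_value A B
  rcases le_or_gt 0 k with hkp | hkn
  · -- convex case: bound by v/dsafe
    have h1 : -k * (v * c / (1 + k*d)) ≤ v * k / (1 + k*d) := by
      have heq : -k * (v * c / (1 + k*d)) = v * (-k * c) / (1 + k*d) := by ring
      rw [heq, div_le_div_iff₀ hP hP]
      have h0 : -k * c ≤ k := by nlinarith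
      exact mul_le_mul_of_nonneg_right (mul_le_mul_of_nonneg_left h0 hv.le) hP.le
    have h2 : v * k / (1 + k*d) ≤ v / dsafe := by
      rw [div_le_div_iff₀ hP hds]
      have hkd : k * dsafe ≤ k * d := mul_le_mul_of_nonneg_left hd1 hkp
      nlinarith [mul_le_mul_of_nonneg_left hkd hv.le]
    have h3 : v * min A B ≤ v * A :=
      mul_le_mul_of_nonneg_left (min_le_left A B) hv.le
    have hA' : v * A = v/R - v/dsafe := by
      rw [hAdef]; field_simp
    linarith
  · -- concave case: bound by v*m/(1-m*dtrig)
    have hnum : v * (-k * c) ≤ v * m := by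
      have h0 : -k * c ≤ -k := by nlinarith
      exact mul_le_mul_of_nonneg_left (le_trans h0 hkm) hv.le
    have hPd : 1 - m*dtrig ≤ 1 + k*d := by nlinarith
    have h1 : -k * (v * c / (1 + k*d)) ≤ v * m / (1 - m*dtrig) := by
      have heq : -k * (v * c / (1 + k*d)) = v * (-k * c) / (1 + k*d) := by ring
      rw [heq]
      exact div_le_div₀ (by positivity) hnum hMden hPd
    have h3 : v * min A B ≤ v * B :=
      mul_le_mul_of_nonneg_left (min_le_right A B) hv.le
    have hB' : v * m / (1 - m*dtrig) - v/R = -(v * B) := by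
      rw [hBdef]
      field_simp
      ring
    linarith

/-- For a unicycle with turning-radius bound R (ū = v/R) near an
obstacle whose boundary curvature κ is continuous and L-periodic, with
d_safe > R, d_safe + 2R < d_trig, and curvature radius 1/|κ| > R + d_trig at
every concave point (κ < 0), under the constant control u = −ū and in the region
d_safe ≤ d ≤ d_trig (with 1 + κd > 0) the angle α satisfies
α̇ = −κ·ṡ − v/R ≤ −δ < 0 for some uniform δ > 0. -/
theorem stmt_14
    (v R dsafe dtrig L : ℝ) (κ : ℝ → ℝ)
    (hv : 0 < v) (hR : 0 < R)
    (hsafe : R < dsafe) (htrig : dsafe + 2 * R < dtrig)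
    (hκc : Continuous κ) (hL : 0 < L) (hper : ∀ σ, κ (σ + L) = κ σ)
    (hconc : ∀ σ, κ σ < 0 → R + dtrig < 1 / |κ σ|) :
    ∃ δ > 0, ∀ σ d α : ℝ, dsafe ≤ d → d ≤ dtrig → 0 < 1 + κ σ * d →
      -(κ σ) * (v * Real.cos α / (1 + κ σ * d)) + -(v / R) ≤ -δ := by
  have hds : 0 < dsafe := lt_trans hR hsafe
  have hdt : dsafe < dtrig := by linarith
  have hdt0 : 0 < dtrig := lt_trans hds hdt
  set g : ℝ → ℝ := fun σ => max (-κ σ) 0 with hg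
  have hgc : Continuous g := hκc.neg.max continuous_const
  obtain ⟨σ0, hσ0, hmax⟩ := isCompact_Icc.exists_isMaxOn
    (Set.nonempty_Icc.2 hL.le) hgc.continuousOn
  obtain ⟨m, hm⟩ : ∃ m, m = g σ0 := ⟨_, rfl⟩
  have hm0 : 0 ≤ m := by rw [hm]; exact le_max_right _ _
  have hgmax : ∀ σ, g σ ≤ m := by
    intro σ
    have hperg : Function.Periodic g L := fun x => by simp [hg, hper x]
    obtain ⟨y, hy, hxy⟩ := hperg.exists_mem_Ico₀ hL σ
    rw [hxy, hm]
    exact hmax ⟨hy.1, hy.2.le⟩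
  have hm1 : m * (R + dtrig) < 1 := by
    rcases lt_or_ge (κ σ0) 0 with h | h
    · have hm' : m = -κ σ0 := by
        rw [hm]; exact max_eq_left (by linarith)
      have h2 := hconc σ0 h
      rw [abs_of_neg h] at h2
      have hmp : 0 < m := by rw [hm']; linarith
      have h3 : m * (R + dtrig) < m * (1 / m) := by
        rw [hm'] at hmp ⊢
        nlinarith
      have h4 : m * (1 / m) = 1 := by field_simp
      linarith
    · have hmz : m = 0 := by
        rw [hm]
        have : -κ σ0 ≤ 0 := by linarith
        simp [hg, this]
      rw [hmz]; norm_num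
  have hMden : 0 < 1 - m * dtrig := by nlinarith
  have h1d : (1:ℝ)/dsafe < 1/R := one_div_lt_one_div_of_lt hR hsafe
  refine ⟨v * min (1/R - 1/dsafe) ((1 - m*(R+dtrig)) / (R * (1 - m*dtrig))),
    ?_, ?_⟩
  · have hA : 0 < 1/R - 1/dsafe := by linarith
    have hB : 0 < (1 - m*(R+dtrig)) / (R * (1 - m*dtrig)) :=
      div_pos (by linarith) (by positivity)
    exact mul_pos hv (lt_min hA hB)
  · intro σ d α hd1 hd2 hP
    have hkm : -κ σ ≤ m := le_trans (le_max_left _ _) (hgmax σ)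
    exact stmt_14_aux v R dsafe dtrig m (κ σ) (Real.cos α) d
      hv hR hds hsafe hdt hm0 hm1 hkm (Real.cos_le_one α)
      (Real.neg_one_le_cos α) hd1 hd2 hP
end

section
/- Let D be a compact planar domain and d_trig > 0 less than the regular margin of D. Define a location r (with dist(r, ∂-neighborhood) conditions) to be 'locked' if it belongs to a simple cave of the d_trig-neighborhood N(d_trig) of D whose two endpoints lie on a common ray emanating from the target T. Then every point r with dist_{co D}(r) > d_trig (distance to the convex hull of D exceeding d_trig) is unlocked. -/
open Metric

lemma mem_cthickening_iff_infDist_le' {X : Type*} [PseudoMetricSpace X]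
    {E : Set X} {x : X} {δ : ℝ} (hE : E.Nonempty) (hδ : 0 ≤ δ) :
    x ∈ cthickening δ E ↔ infDist x E ≤ δ := by
  rw [mem_cthickening_iff, infDist,
    ← ENNReal.le_ofReal_iff_toReal_le (Metric.infEdist_ne_top hE) hδ]


/-- A simple cave of the d_trig-neighborhood of the obstacle `D` with endpoints
`r₁, r₂` on the equidistant curve `C(d_trig)`: the open segment between the
endpoints stays strictly outside the neighborhood, and the cave `S` is a compact
region bounded by a piece of the equidistant curve and that segment. -/
def IsSimpleCave (D : Set (EuclideanSpace ℝ (Fin 2))) (dtrig : ℝ)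
    (r₁ r₂ : EuclideanSpace ℝ (Fin 2)) (S : Set (EuclideanSpace ℝ (Fin 2))) : Prop :=
  infDist r₁ D = dtrig ∧ infDist r₂ D = dtrig ∧
  (∀ x ∈ segment ℝ r₁ r₂, x ≠ r₁ → x ≠ r₂ → dtrig < infDist x D) ∧
  IsCompact S ∧ S.Nonempty ∧
  frontier S ⊆ {x | infDist x D = dtrig} ∪ segment ℝ r₁ r₂

/-- A location `r` is locked (w.r.t. target `Tgt`) if it lies in a simple cave of
the d_trig-neighborhood of `D` whose endpoints lie on a common ray emanating
from the target. -/
def IsLocked (D : Set (EuclideanSpace ℝ (Fin 2))) (dtrig : ℝ)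
    (Tgt r : EuclideanSpace ℝ (Fin 2)) : Prop :=
  ∃ r₁ r₂ S, IsSimpleCave D dtrig r₁ r₂ S ∧
    SameRay ℝ (r₁ - Tgt) (r₂ - Tgt) ∧ r ∈ S

/-- For a compact planar obstacle D and 0 < d_trig below the
regular margin of D, every point whose distance to the convex hull of D exceeds
d_trig is unlocked. -/
theorem stmt_19
    (D : Set (EuclideanSpace ℝ (Fin 2))) (hD : IsCompact D) (hDne : D.Nonempty)
    (dtrig dstar : ℝ) (hdtrig : 0 < dtrig) (hmarg : dtrig < dstar)
    (hregular : ∀ x ∉ D, infDist x D < dstar →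
      ∃! y, y ∈ frontier D ∧ dist x y = infDist x D)
    (Tgt r : EuclideanSpace ℝ (Fin 2))
    (hr : dtrig < infDist r (convexHull ℝ D)) :
    ¬ IsLocked D dtrig Tgt r := by
  rintro ⟨r₁, r₂, S, ⟨h1, h2, _, hScomp, _, hfr⟩, _, hrS⟩
  set C := convexHull ℝ D with hC
  set K := cthickening dtrig C with hKdef
  have hCne : C.Nonempty := hDne.mono (subset_convexHull ℝ D)
  have hKconv : Convex ℝ K := (convex_convexHull ℝ D).cthickening dtrig
  have hKcl : IsClosed K := isClosed_cthickening
  -- endpoints are in K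
  have hmemK : ∀ x : EuclideanSpace ℝ (Fin 2), infDist x D = dtrig → x ∈ K := by
    intro x hx
    rw [mem_cthickening_iff_infDist_le' hCne hdtrig.le]
    exact le_trans (infDist_le_infDist_of_subset (subset_convexHull ℝ D) hDne) hx.le
  -- the frontier of S is contained in K
  have hfrK : frontier S ⊆ K := by
    intro x hx
    rcases hfr hx with h | h
    · exact hmemK x h
    · exact hKconv.segment_subset (hmemK r₁ h1) (hmemK r₂ h2) h
  -- r ∉ K
  have hrK : r ∉ K := by
    rw [mem_cthickening_iff_infDist_le' hCne hdtrig.le]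
    exact not_le.mpr hr
  -- separate r from K
  obtain ⟨φ, u, hKu, hur⟩ := geometric_hahn_banach_closed_point hKconv hKcl hrK
  obtain ⟨y, hyD⟩ := hDne
  have hyK : y ∈ K := self_subset_cthickening C (subset_convexHull ℝ D hyD)
  set v : EuclideanSpace ℝ (Fin 2) := r - y with hv
  have hφv : 0 < φ v := by
    have := hKu y hyK
    simp only [hv, map_sub]
    linarith
  have hvne : v ≠ 0 := fun h => by simp [h] at hφv
  -- the ray avoids K
  have hray : ∀ t : ℝ, 0 ≤ t → r + t • v ∉ K := by
    intro t ht hmem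
    have h1 : φ (r + t • v) = φ r + t * φ v := by simp [map_add, map_smul]
    have h2 : φ (r + t • v) < u := hKu _ hmem
    nlinarith [mul_nonneg ht hφv.le]
  -- the escape time
  set T : Set ℝ := {t : ℝ | 0 ≤ t ∧ r + t • v ∈ S} with hT
  have hTne : T.Nonempty := ⟨0, le_refl 0, by simpa using hrS⟩
  obtain ⟨M, hM⟩ := hScomp.isBounded.exists_norm_le
  have hTbdd : BddAbove T := by
    refine ⟨(M + ‖r‖) / ‖v‖, ?_⟩
    rintro t ⟨ht0, htS⟩
    rw [le_div_iff₀ (norm_pos_iff.mpr hvne)]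
    have h1 : ‖t • v‖ = ‖(r + t • v) - r‖ := by congr 1; abel
    have h2 : ‖(r + t • v) - r‖ ≤ ‖r + t • v‖ + ‖r‖ := norm_sub_le _ _
    have h3 : ‖r + t • v‖ ≤ M := hM _ htS
    have h4 : ‖t • v‖ = t * ‖v‖ := by
      rw [norm_smul, Real.norm_eq_abs, abs_of_nonneg ht0]
    linarith
  have hTcl : IsClosed T := by
    have : T = Set.Ici (0:ℝ) ∩ (fun t : ℝ => r + t • v) ⁻¹' S := by
      ext t; simp [hT, Set.mem_Ici, and_comm]
    rw [this]
    exact isClosed_Ici.inter (hScomp.isClosed.preimage (by continuity))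
  set t₀ := sSup T with ht₀
  have ht₀T : t₀ ∈ T := hTcl.csSup_mem hTne hTbdd
  set p := r + t₀ • v with hp
  have hpS : p ∈ S := ht₀T.2
  -- p is on the frontier of S
  have hpfr : p ∈ frontier S := by
    rw [frontier_eq_closure_inter_closure]
    refine ⟨subset_closure hpS, ?_⟩
    have htend : Filter.Tendsto (fun n : ℕ => r + (t₀ + 1 / (n + 1)) • v)
        Filter.atTop (nhds p) := by
      have h1 : Filter.Tendsto (fun n : ℕ => t₀ + 1 / (n + 1)) Filter.atTop (nhds t₀) := by
        have : Filter.Tendsto (fun n : ℕ => 1 / ((n : ℝ) + 1)) Filter.atTop (nhds 0) :=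
          tendsto_one_div_add_atTop_nhds_zero_nat
        simpa using Filter.Tendsto.add (tendsto_const_nhds (x := t₀)) this
      have : Filter.Tendsto (fun n : ℕ => r + (t₀ + 1 / (n + 1)) • v)
          Filter.atTop (nhds (r + t₀ • v)) := by
        exact (tendsto_const_nhds.add (h1.smul tendsto_const_nhds))
      simpa [hp] using this
    refine mem_closure_of_tendsto htend ?_
    filter_upwards with n
    intro hmem
    have hlt : t₀ < t₀ + 1 / (n + 1 : ℝ) := lt_add_of_pos_right t₀ (by positivity)
    have : t₀ + 1 / (n + 1 : ℝ) ∈ T := ⟨le_trans ht₀T.1 hlt.le, hmem⟩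
    exact absurd (le_csSup hTbdd this) (not_le.mpr hlt)
  exact hray t₀ ht₀T.1 (hfrK hpfr)
end
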